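/- Let X = ∏_{t∈T} X_t be a product of topological spaces X_t with |X_t| > 1 for every t ∈ T, let T be infinite, and let (Y,d) be a metric space with |Y| > 1. Then there exists a strongly separately continuous mapping f : (X,τ) → Y that is discontinuous with respect to τ at every point of X. -/
import Mathlib


open Function Filter Topology

/-- On an infinite product of nontrivial topological spaces there is a strongly
separately continuous map into any nontrivial metric space which is everywhere
discontinuous in the Tychonoff topology. -/
theorem exists_strSepCont_everywhere_discontinuous {T : Type*} [DecidableEq T]
    [Infinite T] {X : T → Type*} [∀ t, TopologicalSpace (X t)]
    (hnt : ∀ t, Nontrivial (X t)) {Y : Type*} [MetricSpace Y] (hY : Nontrivial Y) :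
    ∃ f : (∀ t, X t) → Y,
      (∀ (a : ∀ t, X t) (t : T),
        Filter.Tendsto (fun x => dist (f x) (f (Function.update x t (a t))))
          (nhds a) (nhds 0)) ∧
      (∀ a : ∀ t, X t, ¬ ContinuousAt f a) := by
  classical
  obtain ⟨y₀, y₁, hy⟩ := hY
  -- pick two distinct points in each factor
  choose b c hbc using fun t => (hnt t).exists_pair_ne
  set D : (∀ t, X t) → Set T := fun x => {t | x t ≠ b t} with hD
  set f : (∀ t, X t) → Y := fun x => if (D x).Finite then y₀ else y₁ with hf
  -- f is unchanged by updating one coordinate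
  have key : ∀ (x : ∀ t, X t) (t : T) (v : X t), f (Function.update x t v) = f x := by
    intro x t v
    have h1 : D (Function.update x t v) ⊆ D x ∪ {t} := by
      intro s hs
      rcases eq_or_ne s t with rfl | hst
      · exact Or.inr rfl
      · left
        simp only [hD, Set.mem_setOf_eq] at hs ⊢
        rwa [Function.update_of_ne hst] at hs
    have h2 : D x ⊆ D (Function.update x t v) ∪ {t} := by
      intro s hs
      rcases eq_or_ne s t with rfl | hst
      · exact Or.inr rfl
      · left
        simp only [hD, Set.mem_setOf_eq] at hs ⊢
        rwa [Function.update_of_ne hst]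
    have hiff : (D (Function.update x t v)).Finite ↔ (D x).Finite := by
      constructor
      · intro h
        exact (h.union (Set.finite_singleton t)).subset h2
      · intro h
        exact (h.union (Set.finite_singleton t)).subset h1
    simp only [hf]
    by_cases h : (D x).Finite
    · rw [if_pos h, if_pos (hiff.mpr h)]
    · rw [if_neg h, if_neg (fun h' => h (hiff.mp h'))]
  refine ⟨f, ?_, ?_⟩
  · intro a t
    have : (fun x => dist (f x) (f (Function.update x t (a t)))) = fun _ => (0 : ℝ) := by
      funext x
      rw [key x t (a t), dist_self]
    rw [this]
    exact tendsto_const_nhds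
  · intro a hcont
    have hball : f ⁻¹' (Metric.ball (f a) (dist y₀ y₁)) ∈ 𝓝 a :=
      hcont (Metric.ball_mem_nhds _ (dist_pos.mpr hy))
    rw [nhds_pi, Filter.mem_pi'] at hball
    obtain ⟨I, s, hs, hsub⟩ := hball
    set x₀ : ∀ t, X t := fun t => if t ∈ I then a t else b t with hx₀
    set x₁ : ∀ t, X t := fun t => if t ∈ I then a t else c t with hx₁
    have hx₀mem : x₀ ∈ Set.pi ↑I s := by
      intro t ht
      simp only [hx₀, if_pos (by simpa using ht)]
      exact mem_of_mem_nhds (hs t)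
    have hx₁mem : x₁ ∈ Set.pi ↑I s := by
      intro t ht
      simp only [hx₁, if_pos (by simpa using ht)]
      exact mem_of_mem_nhds (hs t)
    have hfx₀ : f x₀ = y₀ := by
      have : D x₀ ⊆ ↑I := by
        intro t ht
        by_contra h
        exact ht (by simp [hx₀, if_neg (by simpa using h)])
      simp [hf, I.finite_toSet.subset this]
    have hfx₁ : f x₁ = y₁ := by
      have hsub' : (↑I : Set T)ᶜ ⊆ D x₁ := by
        intro t ht
        have : t ∉ I := by simpa using ht
        simp [hD, hx₁, if_neg this, (hbc t).symm]
      have : ¬ (D x₁).Finite := fun h =>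
        (Set.Finite.infinite_compl I.finite_toSet) (h.subset hsub')
      simp [hf, this]
    have h₀ := hsub hx₀mem
    have h₁ := hsub hx₁mem
    rw [Set.mem_preimage, Metric.mem_ball, hfx₀] at h₀
    rw [Set.mem_preimage, Metric.mem_ball, hfx₁] at h₁
    have hfa : f a = y₀ ∨ f a = y₁ := by
      by_cases h : (D a).Finite <;> simp [hf, h]
    rcases hfa with h | h
    · rw [h] at h₁
      exact absurd h₁ (by rw [dist_comm]; exact lt_irrefl _)
    · rw [h] at h₀
      exact lt_irrefl _ h₀
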